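/- Let N be a normal subgroup of a finite group G. Then d(G) = d(G/N) if and only if N is abelian and C_{G/N}(gN) = C_G(g)N/N for every g ∈ G. -/

import Mathlib

private lemma aux_comm_iff {G : Type*} [Group G] (N : Subgroup G) [N.Normal] (x y : G) :
    (x : G ⧸ N) * y = y * x ↔ x * y * x⁻¹ * y⁻¹ ∈ N := by
  rw [← QuotientGroup.eq_one_iff]
  have h : ((x * y * x⁻¹ * y⁻¹ : G) : G ⧸ N)
      = (x : G ⧸ N) * y * (x : G ⧸ N)⁻¹ * (y : G ⧸ N)⁻¹ := rfl
  rw [h, mul_inv_eq_one, mul_inv_eq_iff_eq_mul]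

private lemma key_lemma (G : Type*) [Group G] [Finite G] (N : Subgroup G) [N.Normal] :
    commProb G = commProb (G ⧸ N) ↔
      ∀ x y : G, x * y * x⁻¹ * y⁻¹ ∈ N → x * y = y * x := by
  classical
  set Q := G ⧸ N
  have hs : ∀ q : Q, ((Quotient.out q : G) : Q) = q := fun q => QuotientGroup.out_eq' q
  have hmem : ∀ x : G, (Quotient.out ((x : Q)))⁻¹ * x ∈ N := by
    intro x
    rw [← QuotientGroup.eq_one_iff, QuotientGroup.mk_mul, QuotientGroup.mk_inv, hs,
      inv_mul_cancel]
  -- the key map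
  let f : {p : G × G // Commute p.1 p.2} → {q : Q × Q // Commute q.1 q.2} × N × N :=
    fun p => ⟨⟨((p.1.1 : Q), (p.1.2 : Q)), by
        have h := p.2
        show (p.1.1 : Q) * p.1.2 = (p.1.2 : Q) * p.1.1
        rw [← QuotientGroup.mk_mul, ← QuotientGroup.mk_mul, h]⟩,
      ⟨(Quotient.out ((p.1.1 : Q)))⁻¹ * p.1.1, hmem _⟩,
      ⟨(Quotient.out ((p.1.2 : Q)))⁻¹ * p.1.2, hmem _⟩⟩
  have hrec : ∀ p, p.1.1 = Quotient.out (f p).1.1.1 * ((f p).2.1 : G)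
      ∧ p.1.2 = Quotient.out (f p).1.1.2 * ((f p).2.2 : G) := by
    intro p
    constructor <;> simp [f]
  have hinj : Function.Injective f := by
    intro p p' h
    have h1 := (hrec p).1
    have h2 := (hrec p).2
    rw [h] at h1 h2
    rw [← (hrec p').1] at h1
    rw [← (hrec p').2] at h2
    exact Subtype.ext (Prod.ext h1 h2)
  have hsurj_iff : Function.Surjective f ↔
      ∀ x y : G, x * y * x⁻¹ * y⁻¹ ∈ N → x * y = y * x := by
    constructor
    · intro hsurj x y hN
      have hc : ((x : Q), (y : Q)).1 * ((x : Q), (y : Q)).2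
          = ((x : Q), (y : Q)).2 * ((x : Q), (y : Q)).1 := (aux_comm_iff N x y).2 hN
      obtain ⟨p, hp⟩ := hsurj ⟨⟨((x : Q), (y : Q)), hc⟩,
        ⟨(Quotient.out ((x : Q)))⁻¹ * x, hmem x⟩,
        ⟨(Quotient.out ((y : Q)))⁻¹ * y, hmem y⟩⟩
      have h1 := (hrec p).1
      have h2 := (hrec p).2
      rw [hp] at h1 h2
      simp only [mul_inv_cancel_left] at h1 h2
      have := p.2
      rwa [h1, h2] at this
    · intro hP q
      obtain ⟨⟨⟨q1, q2⟩, hc⟩, ⟨n, hn⟩, ⟨m, hm⟩⟩ := q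
      set x := Quotient.out q1 * n with hx
      set y := Quotient.out q2 * m with hy
      have hxq : (x : Q) = q1 := by
        rw [hx, QuotientGroup.mk_mul, hs, (QuotientGroup.eq_one_iff n).2 hn, mul_one]
      have hyq : (y : Q) = q2 := by
        rw [hy, QuotientGroup.mk_mul, hs, (QuotientGroup.eq_one_iff m).2 hm, mul_one]
      have hcomm : x * y = y * x := by
        apply hP
        rw [← aux_comm_iff N x y, hxq, hyq]
        exact hc
      refine ⟨⟨(x, y), hcomm⟩, ?_⟩
      apply Prod.ext
      · exact Subtype.ext (Prod.ext hxq hyq)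
      · apply Prod.ext <;> apply Subtype.ext <;> simp only [f]
        · show (Quotient.out ((x : Q)))⁻¹ * x = n
          rw [hxq, hx, inv_mul_cancel_left]
        · show (Quotient.out ((y : Q)))⁻¹ * y = m
          rw [hyq, hy, inv_mul_cancel_left]
  -- cardinality comparison
  have hcard_iff : Nat.card {p : G × G // Commute p.1 p.2}
      = Nat.card ({q : Q × Q // Commute q.1 q.2} × N × N) ↔ Function.Surjective f := by
    constructor
    · intro h
      exact ((Nat.bijective_iff_injective_and_card f).2 ⟨hinj, h⟩).2
    · intro h
      exact Nat.card_eq_of_bijective f ⟨hinj, h⟩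
  rw [← hsurj_iff, ← hcard_iff]
  -- now relate commProb equality to the card equality
  have hGcard : Nat.card G = Nat.card Q * Nat.card N :=
    Subgroup.card_eq_card_quotient_mul_card_subgroup N
  have hQpos : 0 < Nat.card Q := Nat.card_pos
  have hNpos : 0 < Nat.card N := Nat.card_pos
  rw [commProb_def, commProb_def, Nat.card_prod, Nat.card_prod, hGcard]
  rw [div_eq_div_iff (by positivity) (by positivity)]
  rw [← Nat.cast_pow, ← Nat.cast_pow, ← Nat.cast_mul, ← Nat.cast_mul, Nat.cast_inj]
  constructor
  · intro h
    have h2 : Nat.card {p : G × G // Commute p.1 p.2} * (Nat.card Q) ^ 2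
        = Nat.card {q : Q × Q // Commute q.1 q.2} * (Nat.card N * Nat.card N)
          * (Nat.card Q) ^ 2 := by
      rw [h]; ring
    exact Nat.eq_of_mul_eq_mul_right (by positivity) h2
  · intro h
    rw [h]; ring

theorem commProb_eq_commProb_quotient_iff
    (G : Type*) [Group G] [Finite G] (N : Subgroup G) [N.Normal] :
    commProb G = commProb (G ⧸ N) ↔
      (∀ a ∈ N, ∀ b ∈ N, a * b = b * a) ∧
        ∀ g : G,
          Subgroup.centralizer {((g : G ⧸ N))} =
            (Subgroup.centralizer {g}).map (QuotientGroup.mk' N) := by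
  rw [key_lemma G N]
  constructor
  · intro hP
    constructor
    · intro a ha b hb
      exact hP a b (mul_mem (mul_mem (mul_mem ha hb) (inv_mem ha)) (inv_mem hb))
    · intro g
      ext q
      constructor
      · intro hq
        obtain ⟨x, rfl⟩ := QuotientGroup.mk_surjective q
        rw [Subgroup.mem_centralizer_singleton_iff] at hq
        have hN : x * g * x⁻¹ * g⁻¹ ∈ N := (aux_comm_iff N x g).1 hq
        exact Subgroup.mem_map.2
          ⟨x, Subgroup.mem_centralizer_singleton_iff.2 (hP x g hN), rfl⟩
      · intro hq
        obtain ⟨c, hc, rfl⟩ := Subgroup.mem_map.1 hq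
        rw [Subgroup.mem_centralizer_singleton_iff] at hc ⊢
        show (c : G ⧸ N) * g = (g : G ⧸ N) * c
        rw [← QuotientGroup.mk_mul, ← QuotientGroup.mk_mul, hc]
  · rintro ⟨hab, hcent⟩ x y hN
    have h1 : (x : G ⧸ N) ∈ Subgroup.centralizer {((y : G ⧸ N))} :=
      Subgroup.mem_centralizer_singleton_iff.2 ((aux_comm_iff N x y).2 hN)
    rw [hcent y] at h1
    obtain ⟨c, hc, hcx⟩ := Subgroup.mem_map.1 h1
    rw [Subgroup.mem_centralizer_singleton_iff] at hc
    have hn : c⁻¹ * x ∈ N := by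
      rw [QuotientGroup.mk'_apply] at hcx
      rw [← QuotientGroup.eq_one_iff, QuotientGroup.mk_mul, QuotientGroup.mk_inv, hcx]
      simp
    have h2 : (y : G ⧸ N) ∈ Subgroup.centralizer {(((c⁻¹ * x : G) : G ⧸ N))} := by
      rw [Subgroup.mem_centralizer_singleton_iff,
        (QuotientGroup.eq_one_iff _).2 hn, one_mul, mul_one]
    rw [hcent (c⁻¹ * x)] at h2
    obtain ⟨d, hd, hdy⟩ := Subgroup.mem_map.1 h2
    rw [Subgroup.mem_centralizer_singleton_iff] at hd
    have hm : d⁻¹ * y ∈ N := by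
      rw [QuotientGroup.mk'_apply] at hdy
      rw [← QuotientGroup.eq_one_iff, QuotientGroup.mk_mul, QuotientGroup.mk_inv, hdy]
      simp
    -- now assemble the commutation
    have hcy : Commute c y := hc
    have hdn : Commute d (c⁻¹ * x) := hd
    have hnm : Commute (c⁻¹ * x) (d⁻¹ * y) := hab _ hn _ hm
    have hny : Commute (c⁻¹ * x) y := by
      have := hdn.symm.mul_right hnm
      rwa [mul_inv_cancel_left] at this
    have := hcy.mul_left hny
    rwa [mul_inv_cancel_left] at this
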